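/- Let G be a group, k ∈ ℕ, P ⊆ G finite with |P| = k, and T ⊆ G finite such that |T △ Tp| < δ|T|/k for each p ∈ P, where δ > 0. Define a graph on vertex set T with edges (g,h) whenever h = gp or g = hp for some p ∈ P. Then the number of elements g ∈ T whose connected component has cardinality less than k is less than δ|T|. -/

import Mathlib

/-- The graph on vertex set `T` with `g ~ h` iff `h = g·p` or `g = h·p` for some `p ∈ P`. -/
def periodGraph {G : Type*} [Group G] (P T : Finset G) : SimpleGraph T where
  Adj g h := g ≠ h ∧ ∃ p ∈ P, (h : G) = (g : G) * p ∨ (g : G) = (h : G) * p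
  symm := by
    constructor
    rintro g h ⟨hne, p, hp, hc⟩
    exact ⟨hne.symm, p, hp, hc.symm⟩
  loopless := by constructor; rintro g ⟨hne, -⟩; exact hne rfl

/-- If `|T △ Tp| < δ|T|/k` for every `p ∈ P`, where `|P| = k`, then the number of
`g ∈ T` whose connected component in the period graph has fewer than `k` elements
is less than `δ|T|`. -/
theorem card_small_components_lt {G : Type*} [Group G] [DecidableEq G]
    (k : ℕ) (hk : 1 ≤ k) (δ : ℝ) (hδ : 0 < δ)
    (P T : Finset G) (hP : P.card = k)
    (hT : ∀ p ∈ P,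
      ((((T \ T.image (· * p)) ∪ (T.image (· * p) \ T)).card : ℝ)) < δ * T.card / k) :
    (Nat.card {g : T // Nat.card {h : T // (periodGraph P T).Reachable g h} < k} : ℝ)
      < δ * T.card := by
  classical
  set S : Finset G := P.biUnion (fun p => T \ T.image (· * p)) with hS
  have key : ∀ g : T, Nat.card {h : T // (periodGraph P T).Reachable g h} < k →
      (g : G) ∈ S := by
    intro g hg
    by_contra hgS
    have hall : ∀ p ∈ P, (g : G) ∈ T.image (· * p) := by
      intro p hp
      by_contra h
      exact hgS (Finset.mem_biUnion.2 ⟨p, hp, Finset.mem_sdiff.2 ⟨g.2, h⟩⟩)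
    have hge : k ≤ Nat.card {h : T // (periodGraph P T).Reachable g h} := by
      haveI : Fintype {h : T // (periodGraph P T).Reachable g h} := Fintype.ofFinite _
      rw [Nat.card_eq_fintype_card]
      have hmem : ∀ p : {x // x ∈ P}, (g : G) * (p : G)⁻¹ ∈ T := by
        rintro ⟨p, hp⟩
        obtain ⟨t, ht, hpt⟩ := Finset.mem_image.1 (hall p hp)
        simpa [← hpt, mul_inv_cancel_right] using ht
      set f : {x // x ∈ P} → {h : T // (periodGraph P T).Reachable g h} := fun p =>
        ⟨⟨(g : G) * (p : G)⁻¹, hmem p⟩, by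
          rcases eq_or_ne ((g : G) * (p : G)⁻¹) (g : G) with he | hne
          · rw [show (⟨(g : G) * (p : G)⁻¹, hmem p⟩ : {x // x ∈ T}) = g from Subtype.ext he]
          · refine SimpleGraph.Adj.reachable ?_
            refine ⟨fun hc => hne ?_, ⟨p, p.2, Or.inr (by simp)⟩⟩
            exact (congrArg Subtype.val hc).symm⟩ with hf
      have hinj : Function.Injective f := by
        rintro p q hpq
        have h1 : (g : G) * (p : G)⁻¹ = (g : G) * (q : G)⁻¹ :=
          congrArg (fun x => (x.1 : G)) hpq
        have := mul_left_cancel h1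
        exact Subtype.ext (inv_injective this)
      calc k = P.card := hP.symm
        _ = Fintype.card {x // x ∈ P} := (Fintype.card_coe P).symm
        _ ≤ _ := Fintype.card_le_of_injective f hinj
    omega
  have h1 : Nat.card {g : T // Nat.card {h : T // (periodGraph P T).Reachable g h} < k}
      ≤ S.card := by
    rw [← Nat.card_eq_finsetCard S]
    exact Nat.card_le_card_of_injective
      (fun g => (⟨(g.1 : G), key g.1 g.2⟩ : {x // x ∈ S}))
      (fun a b hab => Subtype.ext (Subtype.ext (congrArg (fun x => (x.1 : G)) hab)))
  have hne : P.Nonempty := Finset.card_pos.1 (by omega)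
  have hkR : (0 : ℝ) < (k : ℝ) := by exact_mod_cast hk
  calc (Nat.card {g : T // Nat.card {h : T // (periodGraph P T).Reachable g h} < k} : ℝ)
      ≤ (S.card : ℝ) := by exact_mod_cast h1
    _ ≤ ∑ p ∈ P, ((T \ T.image (· * p)).card : ℝ) := by
        exact_mod_cast Finset.card_biUnion_le
    _ < ∑ p ∈ P, δ * T.card / k := by
        refine Finset.sum_lt_sum_of_nonempty hne (fun p hp => lt_of_le_of_lt ?_ (hT p hp))
        exact_mod_cast Finset.card_le_card (Finset.subset_union_left)
    _ = δ * T.card := by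
        rw [Finset.sum_const, hP, nsmul_eq_mul]
        field_simp
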